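/- Let C = Ψ̄_k^{−1}(C_1,…,C_{2^k}) be a linear code over B_k of length n, where each C_i is a nonzero F_{p^r}-linear code of length n. Then the minimum Hamming distance of C equals the minimum over 1 ≤ i ≤ 2^k of the minimum Hamming distances of the C_i: d_H(C) = min_{1 ≤ i ≤ 2^k} d_H(C_i). -/

import Mathlib

open MvPolynomial

set_option synthInstance.maxHeartbeats 400000
set_option maxHeartbeats 1000000

noncomputable def relIdeal (p r k : ℕ) [Fact p.Prime] : Ideal (MvPolynomial (Fin k) (GaloisField p r)) :=
  Ideal.span (Set.range fun i : Fin k => X i ^ 2 - X i)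

abbrev B (p r k : ℕ) [Fact p.Prime] :=
  MvPolynomial (Fin k) (GaloisField p r) ⧸ relIdeal p r k

noncomputable def v (p r k : ℕ) [Fact p.Prime] (i : Fin k) : B p r k :=
  Ideal.Quotient.mk _ (X i)

lemma v_idem (p r k : ℕ) [Fact p.Prime] (i : Fin k) : v p r k i ^ 2 = v p r k i := by
  have h : (X i ^ 2 - X i : MvPolynomial (Fin k) (GaloisField p r)) ∈ relIdeal p r k :=
    Ideal.subset_span ⟨i, rfl⟩
  have h2 := (Ideal.Quotient.eq_zero_iff_mem).mpr h
  rw [map_sub, map_pow] at h2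
  have h3 := sub_eq_zero.mp h2
  simpa [v] using h3

lemma one_sub_v_idem (p r k : ℕ) [Fact p.Prime] (i : Fin k) :
    (1 - v p r k i) ^ 2 = 1 - v p r k i := by
  have h : (1 - v p r k i) ^ 2 = 1 - 2 * v p r k i + v p r k i ^ 2 := by ring
  rw [h, v_idem]; ring

noncomputable def ThAux (p r k : ℕ) [Fact p.Prime] (S : Finset (Fin k)) :
    MvPolynomial (Fin k) (GaloisField p r) →+* B p r k :=
  (aeval (fun i : Fin k => if i ∈ S then 1 - v p r k i else v p r k i)).toRingHom

lemma ThAux_cond (p r k : ℕ) [Fact p.Prime] (S : Finset (Fin k)) :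
    relIdeal p r k ≤ RingHom.ker (ThAux p r k S) := by
  refine Ideal.span_le.mpr ?_
  rintro _ ⟨i, rfl⟩
  simp only [SetLike.mem_coe, RingHom.mem_ker, ThAux, AlgHom.toRingHom_eq_coe,
    RingHom.coe_coe, map_sub, map_pow, aeval_X]
  by_cases h : i ∈ S
  · rw [if_pos h, one_sub_v_idem, sub_self]
  · rw [if_neg h, v_idem, sub_self]

/-- The automorphism `Θ_S` of `B_k`, determined by `v_i ↦ 1 - v_i` for `i ∈ S` and
`v_i ↦ v_i` otherwise, fixing `F_{p^r}` pointwise. -/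
noncomputable def Th (p r k : ℕ) [Fact p.Prime] (S : Finset (Fin k)) :
    B p r k →+* B p r k :=
  Ideal.Quotient.lift (relIdeal p r k) (ThAux p r k S) (fun _ ha => ThAux_cond p r k S ha)

noncomputable def LamAux (p r k : ℕ) [Fact p.Prime] (π : Equiv.Perm (Fin k)) (t : ℕ) :
    MvPolynomial (Fin k) (GaloisField p r) →+* B p r k :=
  eval₂Hom ((Ideal.Quotient.mk (relIdeal p r k)).comp
      ((C : GaloisField p r →+* MvPolynomial (Fin k) (GaloisField p r)).comp
        (iterateFrobenius (GaloisField p r) p t)))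
    (fun i => v p r k (π i))

lemma LamAux_cond (p r k : ℕ) [Fact p.Prime] (π : Equiv.Perm (Fin k)) (t : ℕ) :
    relIdeal p r k ≤ RingHom.ker (LamAux p r k π t) := by
  refine Ideal.span_le.mpr ?_
  rintro _ ⟨i, rfl⟩
  simp only [SetLike.mem_coe, RingHom.mem_ker, LamAux, map_sub, map_pow, eval₂Hom_X']
  rw [v_idem, sub_self]

/-- The automorphism `Λ_{π,t}` of `B_k`, acting on `F_{p^r}` as the Frobenius power
`α ↦ α^{p^t}` and sending `v_i ↦ v_{π(i)}`. -/
noncomputable def Lam (p r k : ℕ) [Fact p.Prime] (π : Equiv.Perm (Fin k)) (t : ℕ) :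
    B p r k →+* B p r k :=
  Ideal.Quotient.lift (relIdeal p r k) (LamAux p r k π t) (fun _ ha => LamAux_cond p r k π t ha)

noncomputable def PhiAux (p r k : ℕ) [Fact p.Prime] :
    MvPolynomial (Fin k) (GaloisField p r) →+* (Fin (2 ^ k) → GaloisField p r) :=
  Pi.ringHom fun j =>
    eval₂Hom (RingHom.id (GaloisField p r))
      (fun i : Fin k => if Nat.testBit (j : ℕ) (i : ℕ) then 1 else 0)

lemma PhiAux_cond (p r k : ℕ) [Fact p.Prime] :
    relIdeal p r k ≤ RingHom.ker (PhiAux p r k) := by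
  refine Ideal.span_le.mpr ?_
  rintro _ ⟨i, rfl⟩
  simp only [SetLike.mem_coe, RingHom.mem_ker, PhiAux]
  funext j
  simp only [Pi.ringHom, RingHom.pi_apply, map_sub, map_pow, eval₂Hom_X']
  by_cases h : Nat.testBit (j : ℕ) (i : ℕ) <;> simp [h]

/-- The Gray map `Φ_k : B_k → F_{p^r}^{2^k}`: the coordinate indexed by `j` is the
evaluation of (a representative of) an element of `B_k` at the point whose `i`-th
coordinate is the `i`-th binary digit of `j`.  This agrees with the recursive
definition `Φ_k(α + β v_k) = (Φ_{k-1}(α), Φ_{k-1}(α + β))`, `Φ_0 = id`. -/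
noncomputable def Phi (p r k : ℕ) [Fact p.Prime] :
    B p r k →+* (Fin (2 ^ k) → GaloisField p r) :=
  Ideal.Quotient.lift (relIdeal p r k) (PhiAux p r k) (fun _ ha => PhiAux_cond p r k ha)


section Aux

variable (p r k : ℕ) [Fact p.Prime]

/-- constant embedding -/
noncomputable def cst (a : GaloisField p r) : B p r k :=
  Ideal.Quotient.mk (relIdeal p r k) (C a)

/-- idempotent generators of `B_k` -/
noncomputable def E (j : Fin (2 ^ k)) : B p r k :=
  ∏ i : Fin k, (if Nat.testBit (j : ℕ) (i : ℕ) then v p r k i else 1 - v p r k i)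

lemma Phi_mk (f : MvPolynomial (Fin k) (GaloisField p r)) :
    Phi p r k (Ideal.Quotient.mk _ f) = PhiAux p r k f :=
  rfl

lemma Phi_cst (a : GaloisField p r) (j : Fin (2 ^ k)) :
    Phi p r k (cst p r k a) j = a := by
  simp [cst, Phi_mk, PhiAux, Pi.ringHom, RingHom.pi_apply]

lemma Phi_v (i : Fin k) (j : Fin (2 ^ k)) :
    Phi p r k (v p r k i) j = if Nat.testBit (j : ℕ) (i : ℕ) then 1 else 0 := by
  simp [v, Phi_mk, PhiAux, Pi.ringHom, RingHom.pi_apply]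

lemma v_mul_v (i : Fin k) : v p r k i * v p r k i = v p r k i := by
  have := v_idem p r k i; rwa [sq] at this

lemma v_mul_E (i : Fin k) (j : Fin (2 ^ k)) :
    v p r k i * E p r k j =
      (if Nat.testBit (j : ℕ) (i : ℕ) then (1 : B p r k) else 0) * E p r k j := by
  classical
  rw [E, ← Finset.mul_prod_erase Finset.univ _ (Finset.mem_univ i), ← mul_assoc, ← mul_assoc]
  by_cases h : Nat.testBit (j : ℕ) (i : ℕ)
  · rw [if_pos h, if_pos h, v_mul_v, one_mul]
  · rw [if_neg h, if_neg h, zero_mul]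
    have hz : v p r k i * (1 - v p r k i) = 0 := by
      rw [mul_sub, mul_one, v_mul_v, sub_self]
    rw [hz, zero_mul]

lemma cst_zero : cst p r k 0 = 0 := by simp [cst]

lemma cst_mul (a b : GaloisField p r) : cst p r k (a * b) = cst p r k a * cst p r k b := by
  simp [cst, map_mul]

lemma cst_add (a b : GaloisField p r) : cst p r k (a + b) = cst p r k a + cst p r k b := by
  simp [cst, map_add]

lemma mul_E (x : B p r k) (j : Fin (2 ^ k)) :
    x * E p r k j = cst p r k (Phi p r k x j) * E p r k j := by
  classical
  obtain ⟨f, rfl⟩ := Ideal.Quotient.mk_surjective x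
  induction f using MvPolynomial.induction_on with
  | C a =>
      show cst p r k a * E p r k j = cst p r k (Phi p r k (cst p r k a) j) * E p r k j
      rw [Phi_cst]
  | add f g hf hg =>
      rw [map_add, add_mul, hf, hg, map_add, Pi.add_apply, cst_add, add_mul]
  | mul_X f i hf =>
      rw [map_mul]
      have hX : (Ideal.Quotient.mk (relIdeal p r k)) (X i) = v p r k i := rfl
      rw [hX]
      have hφ : Phi p r k (Ideal.Quotient.mk (relIdeal p r k) f * v p r k i) j =
          Phi p r k (Ideal.Quotient.mk (relIdeal p r k) f) j *
            (if Nat.testBit (j : ℕ) (i : ℕ) then 1 else 0) := by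
        rw [map_mul, Pi.mul_apply, Phi_v]
      rw [hφ]
      by_cases h : Nat.testBit (j : ℕ) (i : ℕ)
      · simp only [if_pos h, mul_one]
        rw [mul_assoc, v_mul_E, if_pos h, one_mul, hf]
      · simp only [if_neg h, mul_zero]
        rw [mul_assoc, v_mul_E, if_neg h, zero_mul, mul_zero, cst_zero, zero_mul]

lemma bit_eq_of_filter_eq {j j' : Fin (2 ^ k)}
    (h : (Finset.univ.filter fun i : Fin k => Nat.testBit (j : ℕ) (i : ℕ)) =
        Finset.univ.filter fun i : Fin k => Nat.testBit (j' : ℕ) (i : ℕ)) : j = j' := by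
  classical
  apply Fin.ext
  apply Nat.eq_of_testBit_eq
  intro m
  by_cases hm : m < k
  · have h2 := Finset.ext_iff.mp h ⟨m, hm⟩
    simp only [Finset.mem_filter, Finset.mem_univ, true_and] at h2
    by_cases h1 : Nat.testBit (j : ℕ) m
    · have := h2.mp h1; simp [h1, this]
    · by_cases h3 : Nat.testBit (j' : ℕ) m
      · exact absurd (h2.mpr h3) h1
      · simp only [Bool.not_eq_true] at h1 h3; rw [h1, h3]
  · have h1 : (j : ℕ) < 2 ^ m :=
      lt_of_lt_of_le j.2 (Nat.pow_le_pow_right (by norm_num) (by omega))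
    have h2 : (j' : ℕ) < 2 ^ m :=
      lt_of_lt_of_le j'.2 (Nat.pow_le_pow_right (by norm_num) (by omega))
    rw [Nat.testBit_eq_false_of_lt h1, Nat.testBit_eq_false_of_lt h2]

lemma sum_E : ∑ j : Fin (2 ^ k), E p r k j = 1 := by
  classical
  have h1 : (1 : B p r k) = ∏ i : Fin k, (v p r k i + (1 - v p r k i)) := by
    simp
  rw [h1, Finset.prod_add]
  have hcard : (Finset.univ : Finset (Fin k)).powerset.card ≤
      (Finset.univ : Finset (Fin (2 ^ k))).card := by
    rw [Finset.card_powerset, Finset.card_univ, Finset.card_univ,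
      Fintype.card_fin, Fintype.card_fin]
  refine Finset.sum_bij
    (fun (j : Fin (2 ^ k)) _ =>
      Finset.univ.filter fun i : Fin k => Nat.testBit (j : ℕ) (i : ℕ))
    (fun j _ => Finset.mem_powerset.mpr (Finset.filter_subset _ _))
    (fun j1 _ j2 _ h => bit_eq_of_filter_eq k h)
    (fun t ht =>
      ((Finset.surj_on_of_inj_on_of_card_le _
        (fun j _ => Finset.mem_powerset.mpr (Finset.filter_subset _ _))
        (fun j1 j2 _ _ h => bit_eq_of_filter_eq k h) hcard) t ht).imp
        fun a h => ⟨h.1, h.2.symm⟩)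
    ?_
  intro j _
  rw [E, Finset.prod_ite, Finset.filter_not, Finset.sdiff_eq_filter]

lemma Phi_E (j j' : Fin (2 ^ k)) :
    Phi p r k (E p r k j) j' = if j' = j then 1 else 0 := by
  classical
  have h : Phi p r k (E p r k j) j' = ∏ i : Fin k,
      (if Nat.testBit (j : ℕ) (i : ℕ)
        then (if Nat.testBit (j' : ℕ) (i : ℕ) then (1 : GaloisField p r) else 0)
        else 1 - (if Nat.testBit (j' : ℕ) (i : ℕ) then 1 else 0)) := by
    rw [E, map_prod, Finset.prod_apply]
    refine Finset.prod_congr rfl fun i _ => ?_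
    by_cases h : Nat.testBit (j : ℕ) (i : ℕ)
    · rw [if_pos h, if_pos h, Phi_v]
    · rw [if_neg h, if_neg h, map_sub, Pi.sub_apply, map_one, Pi.one_apply, Phi_v]
  rw [h]
  by_cases hjj : j' = j
  · subst hjj
    rw [if_pos rfl]
    refine Finset.prod_eq_one fun i _ => ?_
    by_cases h : Nat.testBit (j' : ℕ) (i : ℕ) <;> simp [h]
  · rw [if_neg hjj]
    have : ∃ i : Fin k, Nat.testBit (j : ℕ) (i : ℕ) ≠ Nat.testBit (j' : ℕ) (i : ℕ) := by
      by_contra hc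
      push_neg at hc
      exact hjj (bit_eq_of_filter_eq k (by
        ext i; simp only [Finset.mem_filter, Finset.mem_univ, true_and, hc i])).symm
    obtain ⟨i, hi⟩ := this
    refine Finset.prod_eq_zero (Finset.mem_univ i) ?_
    by_cases h : Nat.testBit (j : ℕ) (i : ℕ)
    · rw [if_pos h]
      have : ¬ Nat.testBit (j' : ℕ) (i : ℕ) := by
        intro hx; exact hi (by rw [h, hx])
      rw [if_neg this]
    · rw [if_neg h]
      have : Nat.testBit (j' : ℕ) (i : ℕ) := by
        by_contra hx
        exact hi (by simp only [Bool.not_eq_true] at h hx; rw [h, hx])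
      rw [if_pos this, sub_self]

lemma Phi_leftInv (x : B p r k) :
    ∑ j : Fin (2 ^ k), cst p r k (Phi p r k x j) * E p r k j = x := by
  calc ∑ j : Fin (2 ^ k), cst p r k (Phi p r k x j) * E p r k j
      = ∑ j : Fin (2 ^ k), x * E p r k j := by
        refine Finset.sum_congr rfl fun j _ => (mul_E p r k x j).symm
    _ = x * ∑ j : Fin (2 ^ k), E p r k j := by rw [Finset.mul_sum]
    _ = x := by rw [sum_E, mul_one]

lemma Phi_injective : Function.Injective (Phi p r k) := by
  intro x y h
  have hz : Phi p r k (x - y) = 0 := by rw [map_sub, h, sub_self]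
  have := Phi_leftInv p r k (x - y)
  rw [hz] at this
  simp only [Pi.zero_apply, cst_zero, zero_mul, Finset.sum_const_zero] at this
  exact sub_eq_zero.mp this.symm

end Aux

/-- Let `C = Ψ̄_k^{-1}(C_1, …, C_{2^k})` with each `C_i` a nonzero `F_{p^r}`-linear code of
length `n`.  Then the minimum Hamming distance of `C` is the minimum of the minimum
Hamming distances of the `C_i`. -/
theorem stmt_19 (p r k n : ℕ) [Fact p.Prime] [NeZero n] (hr : 1 ≤ r)
    (D : Fin (2 ^ k) → Submodule (GaloisField p r) (Fin n → GaloisField p r))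
    (hD : ∀ i, D i ≠ ⊥) :
    sInf {d : ℕ | ∃ a : Fin n → B p r k,
        (∀ i : Fin (2 ^ k), (fun b => Phi p r k (a b) i) ∈ D i) ∧ a ≠ 0 ∧
        Nat.card {j : Fin n // a j ≠ 0} = d} =
      ⨅ i : Fin (2 ^ k),
        sInf {d : ℕ | ∃ c ∈ D i, c ≠ 0 ∧ Nat.card {j : Fin n // c j ≠ 0} = d} := by
  classical
  have hk : Nonempty (Fin (2 ^ k)) := Fin.pos_iff_nonempty.mp (Nat.two_pow_pos k)
  set S : Fin (2 ^ k) → Set ℕ :=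
    fun i => {d : ℕ | ∃ c ∈ D i, c ≠ 0 ∧ Nat.card {j : Fin n // c j ≠ 0} = d} with hS
  set T : Set ℕ := {d : ℕ | ∃ a : Fin n → B p r k,
      (∀ i : Fin (2 ^ k), (fun b => Phi p r k (a b) i) ∈ D i) ∧ a ≠ 0 ∧
      Nat.card {j : Fin n // a j ≠ 0} = d} with hT
  have key : ∀ (i0 : Fin (2 ^ k)) (c : Fin n → GaloisField p r), c ∈ D i0 → c ≠ 0 →
      Nat.card {j : Fin n // c j ≠ 0} ∈ T := by
    intro i0 c hc hc0
    set a : Fin n → B p r k := fun j => cst p r k (c j) * E p r k i0 with ha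
    have hphi : ∀ (j : Fin n) (i : Fin (2 ^ k)),
        Phi p r k (a j) i = if i = i0 then c j else 0 := by
      intro j i
      rw [ha, map_mul, Pi.mul_apply, Phi_cst, Phi_E]
      by_cases h : i = i0 <;> simp [h]
    refine ⟨a, ?_, ?_, ?_⟩
    · intro i
      by_cases h : i = i0
      · subst h
        have he : (fun b => Phi p r k (a b) i) = c :=
          funext fun b => by rw [hphi, if_pos rfl]
        rw [he]; exact hc
      · have he : (fun b => Phi p r k (a b) i) = 0 :=
          funext fun b => by rw [hphi, if_neg h]; rfl
        rw [he]; exact (D i).zero_mem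
    · obtain ⟨j, hj⟩ := Function.ne_iff.mp hc0
      intro h0
      apply hj
      have h2 := hphi j i0
      rw [if_pos rfl, congrFun h0 j] at h2
      rw [← h2]; simp
    · refine Nat.card_congr (Equiv.subtypeEquivRight fun j => ?_)
      constructor
      · intro haj hcj
        apply haj
        rw [ha]
        show cst p r k (c j) * E p r k i0 = 0
        rw [hcj, cst_zero, zero_mul]
      · intro hcj haj
        apply hcj
        have h2 := hphi j i0
        rw [if_pos rfl, haj, map_zero] at h2
        exact h2.symm
  have hne : ∀ i, ∃ c ∈ D i, c ≠ 0 := fun i => (Submodule.ne_bot_iff _).mp (hD i)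
  have hSne : ∀ i, (S i).Nonempty := by
    intro i
    obtain ⟨c, hc, hc0⟩ := hne i
    exact ⟨_, c, hc, hc0, rfl⟩
  refine le_antisymm ?_ ?_
  · have hmem : (⨅ i, sInf (S i)) ∈ Set.range fun i => sInf (S i) := by
      rw [iInf]
      exact Nat.sInf_mem (Set.range_nonempty _)
    obtain ⟨i0, hi0⟩ := hmem
    have hmem2 : sInf (S i0) ∈ S i0 := Nat.sInf_mem (hSne i0)
    obtain ⟨c, hc, hc0, hcard⟩ := hmem2
    calc sInf T ≤ Nat.card {j : Fin n // c j ≠ 0} := Nat.sInf_le (key i0 c hc hc0)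
      _ = sInf (S i0) := hcard
      _ = ⨅ i, sInf (S i) := hi0
  · have hTne : T.Nonempty := by
      obtain ⟨i0⟩ := hk
      obtain ⟨c, hc, hc0⟩ := hne i0
      exact ⟨_, key i0 c hc hc0⟩
    have hmem : sInf T ∈ T := Nat.sInf_mem hTne
    obtain ⟨a, hstr, ha0, hcard⟩ := hmem
    obtain ⟨j0, hj0⟩ := Function.ne_iff.mp ha0
    have hphi0 : Phi p r k (a j0) ≠ 0 := by
      intro h
      exact hj0 (Phi_injective p r k (by rw [h]; simp))
    obtain ⟨i, hi⟩ := Function.ne_iff.mp hphi0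
    have hcne : (fun b => Phi p r k (a b) i) ≠ 0 := Function.ne_iff.mpr ⟨j0, hi⟩
    calc (⨅ i', sInf (S i')) ≤ sInf (S i) := ciInf_le (OrderBot.bddBelow _) i
      _ ≤ Nat.card {j : Fin n // Phi p r k (a j) i ≠ 0} :=
          Nat.sInf_le ⟨fun b => Phi p r k (a b) i, hstr i, hcne, rfl⟩
      _ ≤ Nat.card {j : Fin n // a j ≠ 0} := by
          refine Nat.card_le_card_of_injective
            (fun x => ⟨x.1, fun h => x.2 (by rw [h]; simp)⟩) ?_
          intro x y hxy
          have hv := congrArg Subtype.val hxy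
          exact Subtype.ext hv
      _ = sInf T := hcard
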